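/- If z is an irreducible 1-cocycle (its only self-intertwiners are scalar multiples of the identity), then the unitary representation of the fundamental group π₁(K, o) defined by z is a factor representation: the centre of the von Neumann algebra R^z(o) generated by {z(ℓ) : ℓ loop at o} consists only of scalars. -/

import Mathlib

/-- A 1-simplex of a poset `K`: two faces and a support dominating both. -/
structure OneSimplex (K : Type*) [PartialOrder K] where
  face0 : K
  face1 : K
  supp : K
  le0 : face0 ≤ supp
  le1 : face1 ≤ supp

/-- The reverse of a 1-simplex: same support, exchanged faces. -/
def OneSimplex.rev {K : Type*} [PartialOrder K] (b : OneSimplex K) : OneSimplex K :=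
  ⟨b.face1, b.face0, b.supp, b.le1, b.le0⟩

/-- The degenerate 1-simplex `σ₀ a` at a 0-simplex `a`. -/
def OneSimplex.degenerate {K : Type*} [PartialOrder K] (a : K) : OneSimplex K :=
  ⟨a, a, a, le_refl a, le_refl a⟩

/-- A 2-simplex of a poset `K`, presented by its three vertices, the supports of its
three faces, and its own support, with all required order relations. Its faces
`∂₀c, ∂₁c, ∂₂c` satisfy the simplicial identities by construction. -/
structure TwoSimplex (K : Type*) [PartialOrder K] where
  vstart : K
  vmid : K
  vend : K
  s0 : K
  s1 : K
  s2 : K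
  supp : K
  hs0 : s0 ≤ supp
  hs1 : s1 ≤ supp
  hs2 : s2 ≤ supp
  h0s : vmid ≤ s0
  h0e : vend ≤ s0
  h1s : vstart ≤ s1
  h1e : vend ≤ s1
  h2s : vstart ≤ s2
  h2e : vmid ≤ s2

/-- The face `∂₀c` (from `vmid` to `vend`). -/
def TwoSimplex.face0 {K : Type*} [PartialOrder K] (c : TwoSimplex K) : OneSimplex K :=
  ⟨c.vend, c.vmid, c.s0, c.h0e, c.h0s⟩

/-- The face `∂₁c` (from `vstart` to `vend`). -/
def TwoSimplex.face1 {K : Type*} [PartialOrder K] (c : TwoSimplex K) : OneSimplex K :=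
  ⟨c.vend, c.vstart, c.s1, c.h1e, c.h1s⟩

/-- The face `∂₂c` (from `vstart` to `vmid`). -/
def TwoSimplex.face2 {K : Type*} [PartialOrder K] (c : TwoSimplex K) : OneSimplex K :=
  ⟨c.vmid, c.vstart, c.s2, c.h2e, c.h2s⟩

/-- A path in the poset `K` from `x` to `y`: a nonempty composable string of
1-simplices, `∂₁` of the first being `x` and `∂₀` of the last being `y`. -/
inductive PPath (K : Type*) [PartialOrder K] : K → K → Type _
  | single (b : OneSimplex K) : PPath K b.face1 b.face0
  | cons (b : OneSimplex K) {x : K} (p : PPath K x b.face1) : PPath K x b.face0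

/-- Composition of paths: `q.comp p` first traverses `p`, then `q`. -/
def PPath.comp {K : Type*} [PartialOrder K] : ∀ {x y w : K}, PPath K y w → PPath K x y → PPath K x w
  | _, _, _, .single b, p => .cons b p
  | _, _, _, .cons b q, p => .cons b (q.comp p)

/-- The reverse of a path. -/
def PPath.rev {K : Type*} [PartialOrder K] : ∀ {x y : K}, PPath K x y → PPath K y x
  | _, _, .single b => .single b.rev
  | _, _, .cons b p => PPath.comp p.rev (.single b.rev)

/-- Multiplicative extension of a function on 1-simplices to paths:
`z(bₙ * ⋯ * b₁) = z(bₙ) ⋯ z(b₁)`. -/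
def PPath.eval {K : Type*} [PartialOrder K] {M : Type*} [Monoid M]
    (z : OneSimplex K → M) : ∀ {x y : K}, PPath K x y → M
  | _, _, .single b => z b
  | _, _, .cons b p => z b * p.eval z

/-- The support of the path is causally disjoint from `o` (every 1-simplex of the path
has support `⊥ o`). -/
def PPath.suppDisjoint {K : Type*} [PartialOrder K] (perp : K → K → Prop) (o : K) :
    ∀ {x y : K}, PPath K x y → Prop
  | _, _, .single b => perp b.supp o
  | _, _, .cons b p => perp b.supp o ∧ p.suppDisjoint perp o

/-- Homotopy of paths with the same endpoints: the equivalence relation generated by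
elementary deformations (replacing `∂₁c` by `∂₀c * ∂₂c` for a 2-simplex `c`), compatible
with composition. -/
inductive PHomotopic {K : Type*} [PartialOrder K] : ∀ {x y : K}, PPath K x y → PPath K x y → Prop
  | refl {x y : K} (p : PPath K x y) : PHomotopic p p
  | symm {x y : K} {p q : PPath K x y} : PHomotopic p q → PHomotopic q p
  | trans {x y : K} {p q r : PPath K x y} : PHomotopic p q → PHomotopic q r → PHomotopic p r
  | deform (c : TwoSimplex K) :
      PHomotopic (.single c.face1) ((PPath.single c.face0).comp (.single c.face2))
  | comp_congr {x y w : K} {q q' : PPath K y w} {p p' : PPath K x y} :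
      PHomotopic q q' → PHomotopic p p' → PHomotopic (q.comp p) (q'.comp p')

/-- The von Neumann algebra (double commutant) generated by the values of a 1-cocycle on
loops based at `o`. -/
def loopVN {K : Type*} [PartialOrder K]
    {H : Type*} [NormedAddCommGroup H] [InnerProductSpace ℂ H] [CompleteSpace H]
    (o : K) (z : OneSimplex K → (H →L[ℂ] H)) : Set (H →L[ℂ] H) :=
  Set.centralizer (Set.centralizer {T : H →L[ℂ] H | ∃ ℓ : PPath K o o, ℓ.eval z = T})

section Aux

variable {K : Type*} [PartialOrder K] {M : Type*} [Monoid M]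

lemma PPath.eval_comp (z : OneSimplex K → M) :
    ∀ {x y w : K} (q : PPath K y w) (p : PPath K x y),
      (q.comp p).eval z = q.eval z * p.eval z
  | _, _, _, .single _, _ => rfl
  | _, _, _, .cons b q, p => by
      show z b * (q.comp p).eval z = (z b * q.eval z) * p.eval z
      rw [PPath.eval_comp z q p, mul_assoc]

lemma PHomotopic.eval_eq {z : OneSimplex K → M}
    (hz : ∀ c : TwoSimplex K, z c.face0 * z c.face2 = z c.face1)
    {x y : K} {p q : PPath K x y} (h : PHomotopic p q) : p.eval z = q.eval z := by
  induction h with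
  | refl => rfl
  | symm _ ih => exact ih.symm
  | trans _ _ ih1 ih2 => exact ih1.trans ih2
  | deform c => exact ((PPath.eval_comp z (.single c.face0) (.single c.face2)).trans (hz c)).symm
  | comp_congr _ _ ih1 ih2 => simp [PPath.eval_comp, ih1, ih2]

lemma mul_cancel_aux {E E' : M} (h : E' * E = 1) (x : M) : E' * (E * x) = x := by
  rw [← mul_assoc, h, one_mul]

end Aux

section Unitary

variable {K : Type*} [PartialOrder K]
variable {H : Type*} [NormedAddCommGroup H] [InnerProductSpace ℂ H] [CompleteSpace H]
variable {z : OneSimplex K → (H →L[ℂ] H)}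

lemma z_degenerate (hzu : ∀ b : OneSimplex K, z b ∈ unitary (H →L[ℂ] H))
    (hzc : ∀ c : TwoSimplex K, z c.face0 * z c.face2 = z c.face1) (a : K) :
    z (OneSimplex.degenerate a) = 1 := by
  have h := hzc ⟨a, a, a, a, a, a, a, le_refl a, le_refl a, le_refl a, le_refl a,
    le_refl a, le_refl a, le_refl a, le_refl a, le_refl a⟩
  -- all three faces are the degenerate simplex
  have hsq : z (OneSimplex.degenerate a) * z (OneSimplex.degenerate a)
      = z (OneSimplex.degenerate a) := h
  have hu := (Unitary.mem_iff.mp (hzu (OneSimplex.degenerate a))).1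
  calc z (OneSimplex.degenerate a)
      = (star (z (OneSimplex.degenerate a)) * z (OneSimplex.degenerate a)) *
          z (OneSimplex.degenerate a) := by rw [hu, one_mul]
    _ = star (z (OneSimplex.degenerate a)) *
          (z (OneSimplex.degenerate a) * z (OneSimplex.degenerate a)) := by rw [mul_assoc]
    _ = 1 := by rw [hsq, hu]

lemma z_rev_mul (hzu : ∀ b : OneSimplex K, z b ∈ unitary (H →L[ℂ] H))
    (hzc : ∀ c : TwoSimplex K, z c.face0 * z c.face2 = z c.face1) (b : OneSimplex K) :
    z b.rev * z b = 1 := by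
  have h := hzc ⟨b.face1, b.face0, b.face1, b.supp, b.face1, b.supp, b.supp,
    le_refl _, b.le1, le_refl _, b.le0, b.le1, le_refl _, le_refl _, b.le1, b.le0⟩
  have : z b.rev * z b = z (OneSimplex.degenerate b.face1) := h
  rw [this, z_degenerate hzu hzc]

lemma z_mul_rev (hzu : ∀ b : OneSimplex K, z b ∈ unitary (H →L[ℂ] H))
    (hzc : ∀ c : TwoSimplex K, z c.face0 * z c.face2 = z c.face1) (b : OneSimplex K) :
    z b * z b.rev = 1 := z_rev_mul hzu hzc b.rev

lemma eval_rev_mul (hzu : ∀ b : OneSimplex K, z b ∈ unitary (H →L[ℂ] H))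
    (hzc : ∀ c : TwoSimplex K, z c.face0 * z c.face2 = z c.face1) :
    ∀ {x y : K} (p : PPath K x y),
      p.rev.eval z * p.eval z = 1 ∧ p.eval z * p.rev.eval z = 1 := by
  intro x y p
  induction p with
  | single b => exact ⟨z_rev_mul hzu hzc b, z_mul_rev hzu hzc b⟩
  | cons b p ih =>
      constructor
      · show (PPath.comp p.rev (.single b.rev)).eval z * (z b * p.eval z) = 1
        refine (congrArg (· * (z b * p.eval z)) (PPath.eval_comp z p.rev (.single b.rev))).trans ?_
        show (p.rev.eval z * z b.rev) * (z b * p.eval z) = 1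
        rw [mul_assoc, mul_cancel_aux (z_rev_mul hzu hzc b), ih.1]
      · show (z b * p.eval z) * (PPath.comp p.rev (.single b.rev)).eval z = 1
        refine (congrArg ((z b * p.eval z) * ·) (PPath.eval_comp z p.rev (.single b.rev))).trans ?_
        show (z b * p.eval z) * (p.rev.eval z * z b.rev) = 1
        rw [mul_assoc, mul_cancel_aux ih.2, z_mul_rev hzu hzc b]

end Unitary

theorem irreducible_cocycle_factor_representation {K : Type*} [PartialOrder K]
    {H : Type*} [NormedAddCommGroup H] [InnerProductSpace ℂ H] [CompleteSpace H]
    (hconn : ∀ x y : K, Nonempty (PPath K x y))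
    (perp : K → K → Prop)
    (hsymm : ∀ x y : K, perp x y → perp y x)
    (R : K → VonNeumannAlgebra H)
    (hiso : ∀ ⦃a b : K⦄, a ≤ b → (R a : Set (H →L[ℂ] H)) ⊆ (R b : Set (H →L[ℂ] H)))
    (hhaag : ∀ a : K, (R a : Set (H →L[ℂ] H)) =
        ⋂ (b : K), ⋂ (_ : perp b a), ((R b).commutant : Set (H →L[ℂ] H)))
    (hccconn : ∀ (o x y : K), perp x o → perp y o →
        ∃ q : PPath K x y, q.suppDisjoint perp o)
    (hdef : ∀ (a o : K), perp a o → ∀ ℓ : PPath K a a,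
        ∃ ℓ' : PPath K a a, PHomotopic ℓ ℓ' ∧ ℓ'.suppDisjoint perp o)
    (o : K)
    (z : OneSimplex K → (H →L[ℂ] H))
    (hzu : ∀ b : OneSimplex K, z b ∈ unitary (H →L[ℂ] H))
    (hzc : ∀ c : TwoSimplex K, z c.face0 * z c.face2 = z c.face1)
    (hloc : ∀ b : OneSimplex K, z b ∈ R b.supp)
    (hirr : ∀ t : K → (H →L[ℂ] H), (∀ a : K, t a ∈ R a) →
      (∀ b : OneSimplex K, t b.face0 * z b = z b * t b.face1) →
      ∃ c : ℂ, ∀ a : K, t a = c • (1 : H →L[ℂ] H)) :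
    ∀ X ∈ loopVN o z, (∀ Y ∈ loopVN o z, Commute X Y) →
      ∃ c : ℂ, X = c • (1 : H →L[ℂ] H) := by
  intro X hX hcomm
  set S : Set (H →L[ℂ] H) := {T : H →L[ℂ] H | ∃ ℓ : PPath K o o, ℓ.eval z = T} with hS
  -- X commutes with the evaluation of every loop at o
  have hXS : ∀ ℓ : PPath K o o, X * ℓ.eval z = ℓ.eval z * X := by
    intro ℓ
    exact hcomm (ℓ.eval z) (Set.subset_centralizer_centralizer ⟨ℓ, rfl⟩)
  -- X commutes with everything in the commutant of S
  have hXC : ∀ Y ∈ Set.centralizer S, Y * X = X * Y := fun Y hY => hX Y hY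
  -- choose a path from o to each point
  have p : ∀ a : K, PPath K o a := fun a => (hconn o a).some
  set t : K → (H →L[ℂ] H) := fun a => (p a).eval z * X * (p a).rev.eval z with ht
  have hinv1 : ∀ {x y : K} (q : PPath K x y), q.rev.eval z * q.eval z = 1 :=
    fun q => (eval_rev_mul hzu hzc q).1
  have hinv2 : ∀ {x y : K} (q : PPath K x y), q.eval z * q.rev.eval z = 1 :=
    fun q => (eval_rev_mul hzu hzc q).2
  -- Step A: t a ∈ R a
  have hmem : ∀ a : K, t a ∈ R a := by
    intro a
    rw [← SetLike.mem_coe, hhaag a]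
    refine Set.mem_iInter.2 fun b => Set.mem_iInter.2 fun hba => ?_
    rw [SetLike.mem_coe, VonNeumannAlgebra.mem_commutant_iff]
    intro Y hY
    -- Y commutes with the evaluation of any path whose support is ⊥ b
    have hYdis : ∀ {x y : K} (q : PPath K x y), q.suppDisjoint perp b →
        Y * q.eval z = q.eval z * Y := by
      intro x y q hq
      induction q with
      | single s =>
          have hsb : perp s.supp b := hq
          have hsub : (R b : Set (H →L[ℂ] H)) ⊆ ((R s.supp).commutant : Set (H →L[ℂ] H)) := by
            rw [hhaag b]
            exact fun T hT => Set.mem_iInter.1 (Set.mem_iInter.1 hT s.supp) hsb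
          have := (VonNeumannAlgebra.mem_commutant_iff.mp (hsub hY)) (z s) (hloc s)
          exact this.symm
      | cons s q ih =>
          obtain ⟨h1, h2⟩ := hq
          have hsub : (R b : Set (H →L[ℂ] H)) ⊆ ((R s.supp).commutant : Set (H →L[ℂ] H)) := by
            rw [hhaag b]
            exact fun T hT => Set.mem_iInter.1 (Set.mem_iInter.1 hT s.supp) h1
          have hzs := (VonNeumannAlgebra.mem_commutant_iff.mp (hsub hY)) (z s) (hloc s)
          show Y * (z s * q.eval z) = (z s * q.eval z) * Y
          rw [← mul_assoc, ← hzs, mul_assoc, ih h2, ← mul_assoc]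
    -- Y commutes with the evaluation of any loop at a
    have hYloop : ∀ ℓ : PPath K a a, Y * ℓ.eval z = ℓ.eval z * Y := by
      intro ℓ
      obtain ⟨ℓ', hhom, hdis⟩ := hdef a b (hsymm b a hba) ℓ
      rw [PHomotopic.eval_eq hzc hhom]
      exact hYdis ℓ' hdis
    -- hence (p a).rev.eval z * Y * (p a).eval z is in the commutant of S
    set E := (p a).eval z
    set E' := (p a).rev.eval z
    have hcent : E' * Y * E ∈ Set.centralizer S := by
      rw [Set.mem_centralizer_iff]
      rintro m ⟨ℓ, rfl⟩
      have := hYloop ((p a).comp (ℓ.comp (p a).rev))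
      rw [PPath.eval_comp, PPath.eval_comp] at this
      -- this : Y * (E * (ℓ.eval z * E')) = E * (ℓ.eval z * E') * Y
      have key : ∀ x, Y * (E * (ℓ.eval z * (E' * x))) = E * (ℓ.eval z * (E' * (Y * x))) := by
        intro x
        calc Y * (E * (ℓ.eval z * (E' * x)))
            = (Y * (E * (ℓ.eval z * E'))) * x := by simp only [mul_assoc]
          _ = ((E * (ℓ.eval z * E')) * Y) * x := by rw [this, mul_assoc]
          _ = E * (ℓ.eval z * (E' * (Y * x))) := by simp only [mul_assoc]
      calc ℓ.eval z * (E' * Y * E)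
          = E' * (E * (ℓ.eval z * (E' * (Y * E)))) := by
            simp only [mul_assoc, mul_cancel_aux (E := E) (E' := E') (hinv1 (p a)), mul_cancel_aux (E := E') (E' := E) (hinv2 (p a))]
        _ = E' * (Y * (E * (ℓ.eval z * (E' * E)))) := by rw [← key]
        _ = (E' * Y * E) * ℓ.eval z := by
            rw [hinv1 (p a)]
            simp only [mul_assoc, mul_one]
    -- since X is in the double commutant, it commutes with E' * Y * E
    have hXY := hXC _ hcent
    -- now unfold and conclude Y * t a = t a * Y
    show Y * (E * X * E') = (E * X * E') * Y
    have expand : ∀ x, (E' * Y * E) * (X * x) = X * (E' * (Y * (E * x))) := by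
      intro x
      calc (E' * Y * E) * (X * x) = ((E' * Y * E) * X) * x := by simp only [mul_assoc]
        _ = (X * (E' * Y * E)) * x := by rw [hXY]
        _ = X * (E' * (Y * (E * x))) := by simp only [mul_assoc]
    calc Y * (E * X * E')
        = E * ((E' * Y * E) * (X * E')) := by
          simp only [mul_assoc, mul_cancel_aux (E := E') (E' := E) (hinv2 (p a))]
      _ = E * (X * (E' * (Y * (E * E')))) := by rw [expand]
      _ = (E * X * E') * Y := by
          rw [hinv2 (p a)]
          simp only [mul_assoc, mul_one]
  -- Step B: t is a self-intertwiner of z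
  have hint : ∀ b : OneSimplex K, t b.face0 * z b = z b * t b.face1 := by
    intro b
    set E0 := (p b.face0).eval z
    set E0' := (p b.face0).rev.eval z
    set E1 := (p b.face1).eval z
    set E1' := (p b.face1).rev.eval z
    have hloop := hXS ((p b.face0).rev.comp ((PPath.single b).comp (p b.face1)))
    rw [PPath.eval_comp, PPath.eval_comp] at hloop
    have hsb : PPath.eval z (PPath.single b) = z b := rfl
    rw [hsb] at hloop
    -- hloop : X * (E0' * (z b * E1)) = E0' * (z b * E1) * X
    show (E0 * X * E0') * z b = z b * (E1 * X * E1')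
    calc (E0 * X * E0') * z b
        = E0 * (X * (E0' * (z b * (E1 * E1')))) := by
          rw [hinv2 (p b.face1)]
          simp only [mul_assoc, mul_one]
      _ = E0 * ((X * (E0' * (z b * E1))) * E1') := by simp only [mul_assoc]
      _ = E0 * ((E0' * (z b * E1) * X) * E1') := by rw [hloop]
      _ = z b * (E1 * X * E1') := by
          simp only [mul_assoc, mul_cancel_aux (E := E0') (E' := E0) (hinv2 (p b.face0))]
  -- Step C: conclude
  obtain ⟨c, hc⟩ := hirr t hmem hint
  refine ⟨c, ?_⟩
  have hto := hc o
  have : t o = X := by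
    show (p o).eval z * X * (p o).rev.eval z = X
    rw [← hXS (p o), mul_assoc, hinv2 (p o), mul_one]
  rw [← this, hto]
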